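/- The sequence a(n) = Σ_{k=0}^{n} C(n,k) C(2k,k) C(2n−2k,n−k) satisfies the recurrence (n+1)^2 a(n+1) = (12n^2+12n+4) a(n) − 32 n^2 a(n-1) for all n ≥ 1, with a(0)=1, a(1)=4. -/

import Mathlib

open Nat

lemma fact_cast_succ (n : ℕ) : ((n+1)! : ℚ) = ((n:ℚ)+1) * (n ! : ℚ) := by
  rw [Nat.factorial_succ]; push_cast; ring

lemma cat_cast (m : ℕ) :
    (catalan m : ℚ) = ((2*m)! : ℚ) / (((m:ℚ)+1) * ((m ! : ℚ) * (m ! : ℚ))) := by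
  have h : (m+1) * catalan m = (2*m).choose m := by
    simpa [Nat.centralBinom] using succ_mul_catalan_eq_centralBinom m
  have h2 : (((m:ℚ))+1) * (catalan m : ℚ) = ((2*m).choose m : ℚ) := by exact_mod_cast h
  rw [Nat.cast_choose ℚ (by omega : m ≤ 2*m), show 2*m - m = m by omega] at h2
  have hm : ((m ! : ℕ) : ℚ) ≠ 0 := Nat.cast_ne_zero.2 (Nat.factorial_ne_zero m)
  have hm1 : ((m:ℚ)+1) ≠ 0 := by positivity
  field_simp at h2 ⊢
  linarith [h2]

lemma key0 (m : ℕ) :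
    ((m:ℚ)+2)^2 * ((2*m+4).choose (m+2) : ℚ)
      - (12*((m:ℚ)+1)^2 + 12*((m:ℚ)+1) + 4) * ((2*m+2).choose (m+1) : ℚ)
      + 32*((m:ℚ)+1)^2 * ((2*m).choose m : ℚ)
    = 4*(2*((m:ℚ)+1) - (2*((m:ℚ)+1)-1)*((m:ℚ)+2)) * (catalan m : ℚ) := by
  have hm : ((m !  : ℕ) : ℚ) ≠ 0 := Nat.cast_ne_zero.2 (Nat.factorial_ne_zero m)
  have h2m : (((2*m)! : ℕ) : ℚ) ≠ 0 := Nat.cast_ne_zero.2 (Nat.factorial_ne_zero _)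
  have hm1 : ((m:ℚ)+1) ≠ 0 := by positivity
  have hm2 : ((m:ℚ)+2) ≠ 0 := by positivity
  have c1 : ((2*m+4).choose (m+2) : ℚ) = ((2*m+4)! : ℚ) / (((m+2)! : ℚ) * ((m+2)! : ℚ)) := by
    rw [Nat.cast_choose ℚ (by omega : m+2 ≤ 2*m+4), show 2*m+4 - (m+2) = m+2 by omega]
  have c2 : ((2*m+2).choose (m+1) : ℚ) = ((2*m+2)! : ℚ) / (((m+1)! : ℚ) * ((m+1)! : ℚ)) := by
    rw [Nat.cast_choose ℚ (by omega : m+1 ≤ 2*m+2), show 2*m+2 - (m+1) = m+1 by omega]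
  have c3 : ((2*m).choose m : ℚ) = ((2*m)! : ℚ) / ((m ! : ℚ) * (m ! : ℚ)) := by
    rw [Nat.cast_choose ℚ (by omega : m ≤ 2*m), show 2*m - m = m by omega]
  have f4 : ((2*m+4)! : ℚ) = (2*(m:ℚ)+4)*(2*(m:ℚ)+3)*(2*(m:ℚ)+2)*(2*(m:ℚ)+1)*((2*m)! : ℚ) := by
    rw [show 2*m+4 = 2*m+3+1 by omega, fact_cast_succ, show 2*m+3 = 2*m+2+1 by omega,
      fact_cast_succ, show 2*m+2 = 2*m+1+1 by omega, fact_cast_succ, fact_cast_succ]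
    push_cast; ring
  have f2 : ((2*m+2)! : ℚ) = (2*(m:ℚ)+2)*(2*(m:ℚ)+1)*((2*m)! : ℚ) := by
    rw [show 2*m+2 = 2*m+1+1 by omega, fact_cast_succ, fact_cast_succ]
    push_cast; ring
  have g2 : ((m+2)! : ℚ) = ((m:ℚ)+2)*((m:ℚ)+1)*(m ! : ℚ) := by
    rw [show m+2 = m+1+1 by omega, fact_cast_succ, fact_cast_succ]
    push_cast; ring
  have g1 : ((m+1)! : ℚ) = ((m:ℚ)+1)*(m ! : ℚ) := fact_cast_succ m
  rw [c1, c2, c3, f4, f2, g2, g1, cat_cast]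
  field_simp
  ring

set_option maxHeartbeats 2000000 in
lemma keyS (j m : ℕ) :
    ((j:ℚ)+(m:ℚ)+3)^2 * ((j+m+3).choose (j+1) : ℚ) * ((2*j+2).choose (j+1) : ℚ)
        * ((2*m+4).choose (m+2) : ℚ)
    - (12*((j:ℚ)+m+2)^2 + 12*((j:ℚ)+m+2) + 4) * ((j+m+2).choose (j+1) : ℚ)
        * ((2*j+2).choose (j+1) : ℚ) * ((2*m+2).choose (m+1) : ℚ)
    + 32*((j:ℚ)+m+2)^2 * ((j+m+1).choose (j+1) : ℚ) * ((2*j+2).choose (j+1) : ℚ)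
        * ((2*m).choose m : ℚ)
    = 2*((j:ℚ)+2)*(2*((j:ℚ)+m+2)*((j:ℚ)+2) - (2*((j:ℚ)+m+2)-1)*((j:ℚ)+m+3))
        * ((j+m+2).choose (j+1) : ℚ) * ((2*j+4).choose (j+2) : ℚ) * (catalan m : ℚ)
    - 2*((j:ℚ)+1)*(2*((j:ℚ)+m+2)*((j:ℚ)+1) - (2*((j:ℚ)+m+2)-1)*((j:ℚ)+m+3))
        * ((j+m+2).choose j : ℚ) * ((2*j+2).choose (j+1) : ℚ) * (catalan (m+1) : ℚ) := by
  have hm : ((m ! : ℕ) : ℚ) ≠ 0 := Nat.cast_ne_zero.2 (Nat.factorial_ne_zero m)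
  have hj : ((j ! : ℕ) : ℚ) ≠ 0 := Nat.cast_ne_zero.2 (Nat.factorial_ne_zero j)
  have h2m : (((2*m)! : ℕ) : ℚ) ≠ 0 := Nat.cast_ne_zero.2 (Nat.factorial_ne_zero _)
  have h2j : (((2*j+2)! : ℕ) : ℚ) ≠ 0 := Nat.cast_ne_zero.2 (Nat.factorial_ne_zero _)
  have hX : (((j+m+1)! : ℕ) : ℚ) ≠ 0 := Nat.cast_ne_zero.2 (Nat.factorial_ne_zero _)
  have hm1 : ((m:ℚ)+1) ≠ 0 := by positivity
  have hm2 : ((m:ℚ)+2) ≠ 0 := by positivity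
  have hj1 : ((j:ℚ)+1) ≠ 0 := by positivity
  have hj2 : ((j:ℚ)+2) ≠ 0 := by positivity
  have d1 : ((j+m+3).choose (j+1) : ℚ) = ((j+m+3)! : ℚ) / (((j+1)! : ℚ) * ((m+2)! : ℚ)) := by
    rw [Nat.cast_choose ℚ (by omega : j+1 ≤ j+m+3), show j+m+3 - (j+1) = m+2 by omega]
  have d2 : ((j+m+2).choose (j+1) : ℚ) = ((j+m+2)! : ℚ) / (((j+1)! : ℚ) * ((m+1)! : ℚ)) := by
    rw [Nat.cast_choose ℚ (by omega : j+1 ≤ j+m+2), show j+m+2 - (j+1) = m+1 by omega]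
  have d3 : ((j+m+1).choose (j+1) : ℚ) = ((j+m+1)! : ℚ) / (((j+1)! : ℚ) * (m ! : ℚ)) := by
    rw [Nat.cast_choose ℚ (by omega : j+1 ≤ j+m+1), show j+m+1 - (j+1) = m by omega]
  have d4 : ((j+m+2).choose j : ℚ) = ((j+m+2)! : ℚ) / ((j ! : ℚ) * ((m+2)! : ℚ)) := by
    rw [Nat.cast_choose ℚ (by omega : j ≤ j+m+2), show j+m+2 - j = m+2 by omega]
  have e1 : ((2*j+2).choose (j+1) : ℚ) = ((2*j+2)! : ℚ) / (((j+1)! : ℚ) * ((j+1)! : ℚ)) := by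
    rw [Nat.cast_choose ℚ (by omega : j+1 ≤ 2*j+2), show 2*j+2 - (j+1) = j+1 by omega]
  have e2 : ((2*j+4).choose (j+2) : ℚ) = ((2*j+4)! : ℚ) / (((j+2)! : ℚ) * ((j+2)! : ℚ)) := by
    rw [Nat.cast_choose ℚ (by omega : j+2 ≤ 2*j+4), show 2*j+4 - (j+2) = j+2 by omega]
  have c1 : ((2*m+4).choose (m+2) : ℚ) = ((2*m+4)! : ℚ) / (((m+2)! : ℚ) * ((m+2)! : ℚ)) := by
    rw [Nat.cast_choose ℚ (by omega : m+2 ≤ 2*m+4), show 2*m+4 - (m+2) = m+2 by omega]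
  have c2 : ((2*m+2).choose (m+1) : ℚ) = ((2*m+2)! : ℚ) / (((m+1)! : ℚ) * ((m+1)! : ℚ)) := by
    rw [Nat.cast_choose ℚ (by omega : m+1 ≤ 2*m+2), show 2*m+2 - (m+1) = m+1 by omega]
  have c3 : ((2*m).choose m : ℚ) = ((2*m)! : ℚ) / ((m ! : ℚ) * (m ! : ℚ)) := by
    rw [Nat.cast_choose ℚ (by omega : m ≤ 2*m), show 2*m - m = m by omega]
  have hcat1 : (catalan (m+1) : ℚ)
      = ((2*m+2)! : ℚ) / (((m:ℚ)+2) * (((m+1)! : ℚ) * ((m+1)! : ℚ))) := by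
    rw [cat_cast (m+1), show 2*(m+1) = 2*m+2 by omega]
    push_cast; ring_nf
  have fX3 : ((j+m+3)! : ℚ) = ((j:ℚ)+m+3)*((j:ℚ)+m+2)*((j+m+1)! : ℚ) := by
    rw [show j+m+3 = (j+m+2)+1 by omega, fact_cast_succ, show j+m+2 = (j+m+1)+1 by omega,
      fact_cast_succ]
    push_cast; ring
  have fX2 : ((j+m+2)! : ℚ) = ((j:ℚ)+m+2)*((j+m+1)! : ℚ) := by
    rw [show j+m+2 = (j+m+1)+1 by omega, fact_cast_succ]
    push_cast; ring
  have fj1 : ((j+1)! : ℚ) = ((j:ℚ)+1)*(j ! : ℚ) := fact_cast_succ j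
  have fj2 : ((j+2)! : ℚ) = ((j:ℚ)+2)*(((j:ℚ)+1)*(j ! : ℚ)) := by
    rw [show j+2 = (j+1)+1 by omega, fact_cast_succ, fact_cast_succ]
    push_cast; ring
  have f2j : ((2*j+4)! : ℚ) = (2*(j:ℚ)+4)*(2*(j:ℚ)+3)*((2*j+2)! : ℚ) := by
    rw [show 2*j+4 = (2*j+3)+1 by omega, fact_cast_succ, show 2*j+3 = (2*j+2)+1 by omega,
      fact_cast_succ]
    push_cast; ring
  have f4 : ((2*m+4)! : ℚ) = (2*(m:ℚ)+4)*(2*(m:ℚ)+3)*(2*(m:ℚ)+2)*(2*(m:ℚ)+1)*((2*m)! : ℚ) := by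
    rw [show 2*m+4 = 2*m+3+1 by omega, fact_cast_succ, show 2*m+3 = 2*m+2+1 by omega,
      fact_cast_succ, show 2*m+2 = 2*m+1+1 by omega, fact_cast_succ, fact_cast_succ]
    push_cast; ring
  have f2 : ((2*m+2)! : ℚ) = (2*(m:ℚ)+2)*(2*(m:ℚ)+1)*((2*m)! : ℚ) := by
    rw [show 2*m+2 = 2*m+1+1 by omega, fact_cast_succ, fact_cast_succ]
    push_cast; ring
  have g2 : ((m+2)! : ℚ) = ((m:ℚ)+2)*((m:ℚ)+1)*(m ! : ℚ) := by
    rw [show m+2 = m+1+1 by omega, fact_cast_succ, fact_cast_succ]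
    push_cast; ring
  have g1 : ((m+1)! : ℚ) = ((m:ℚ)+1)*(m ! : ℚ) := fact_cast_succ m
  rw [d1, d2, d3, d4, e1, e2, c1, c2, c3, hcat1, cat_cast, fX3, fX2, fj2, fj1, f2j, f4, f2,
    g2, g1]
  field_simp
  ring

def Tz (n k : ℕ) : ℤ :=
  (Nat.choose n k : ℤ) * (Nat.choose (2*k) k : ℤ) * (Nat.choose (2*n - 2*k) (n-k) : ℤ)

def gz (N j : ℕ) : ℤ :=
  2*(j:ℤ)*(2*((N:ℤ)+1)*(j:ℤ) - (2*(N:ℤ)+1)*((N:ℤ)+2)) * ((N+1).choose (j-1) : ℤ)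
    * ((2*j).choose j : ℤ) * (catalan (N+1-j) : ℤ)

lemma perterm (N k : ℕ) (hk : k ≤ N) :
    ((N:ℤ)+2)^2 * Tz (N+1+1) k - (12*((N:ℤ)+1)^2+12*((N:ℤ)+1)+4) * Tz (N+1) k
      + 32*((N:ℤ)+1)^2 * Tz N k = gz N (k+1) - gz N k := by
  rcases k with _ | j
  · simp only [Tz, gz]
    rw [show 2*(N+1+1) - 2*0 = 2*N+4 by omega, show N+1+1 - 0 = N+2 by omega,
      show 2*(N+1) - 2*0 = 2*N+2 by omega, show N+1 - 0 = N+1 by omega,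
      show 2*N - 2*0 = 2*N by omega, show N - 0 = N by omega,
      show (0:ℕ)+1 = 1 by omega, show (1:ℕ)-1 = 0 by omega,
      show N+1-1 = N by omega, show 2*1 = 2 by omega]
    apply Int.cast_injective (α := ℚ)
    push_cast
    have h := key0 N
    simp only [Nat.choose_zero_right, Nat.choose_self, Nat.choose_one_right, catalan_zero] at *
    push_cast
    linear_combination h
  · obtain ⟨m, rfl⟩ : ∃ m, N = j+1+m := ⟨N-(j+1), by omega⟩
    simp only [Tz, gz]
    rw [show 2*(j+1+m+1+1) - 2*(j+1) = 2*m+4 by omega,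
      show j+1+m+1+1 - (j+1) = m+2 by omega,
      show 2*(j+1+m+1) - 2*(j+1) = 2*m+2 by omega,
      show j+1+m+1 - (j+1+1) = m by omega,
      show j+1+m+1 - (j+1) = m+1 by omega,
      show 2*(j+1+m) - 2*(j+1) = 2*m by omega,
      show j+1+m - (j+1) = m by omega,
      show j+1+1-1 = j+1 by omega,
      show j+1-1 = j by omega,
      show 2*(j+1+1) = 2*j+4 by omega,
      show 2*(j+1) = 2*j+2 by omega,
      show j+1+m+1+1 = j+m+3 by omega,
      show j+1+m+1 = j+m+2 by omega,
      show j+1+m = j+m+1 by omega,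
      show j+1+1 = j+2 by omega]
    apply Int.cast_injective (α := ℚ)
    push_cast
    linear_combination keyS j m

lemma sumL (N : ℕ) :
    ∑ k ∈ Finset.range (N+1+1+1),
      (((N:ℤ)+2)^2 * Tz (N+1+1) k - (12*((N:ℤ)+1)^2+12*((N:ℤ)+1)+4) * Tz (N+1) k
        + 32*((N:ℤ)+1)^2 * Tz N k) = 0 := by
  have hB : ((N:ℚ)+2) * ((2*N+4).choose (N+2) : ℚ)
      = 2*(2*(N:ℚ)+3) * ((2*N+2).choose (N+1) : ℚ) := by
    have h := Nat.succ_mul_centralBinom_succ (N+1)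
    simp only [Nat.centralBinom] at h
    rw [show 2*(N+1+1) = 2*N+4 by omega, show N+1+1 = N+2 by omega,
      show 2*(N+1) = 2*N+2 by omega] at h
    have hq : ((N:ℚ)+2) * ((2*N+4).choose (N+2) : ℚ)
        = 2*(2*(N:ℚ)+2+1) * ((2*N+2).choose (N+1) : ℚ) := by exact_mod_cast h
    linear_combination hq
  rw [Finset.sum_range_succ, Finset.sum_range_succ]
  have tel : ∑ k ∈ Finset.range (N+1),
      (((N:ℤ)+2)^2 * Tz (N+1+1) k - (12*((N:ℤ)+1)^2+12*((N:ℤ)+1)+4) * Tz (N+1) k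
        + 32*((N:ℤ)+1)^2 * Tz N k) = gz N (N+1) - gz N 0 := by
    rw [Finset.sum_congr rfl (fun k hk => perterm N k (by
      have := Finset.mem_range.mp hk; omega))]
    exact Finset.sum_range_sub (gz N) (N+1)
  rw [tel]
  have hz1 : Nat.choose N (N+1) = 0 := Nat.choose_eq_zero_of_lt (by omega)
  have hz2 : Nat.choose (N+1) (N+1+1) = 0 := Nat.choose_eq_zero_of_lt (by omega)
  have hz3 : Nat.choose N (N+1+1) = 0 := Nat.choose_eq_zero_of_lt (by omega)
  simp only [Tz, gz, hz1, hz2, hz3]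
  rw [show 2*(N+1+1) - 2*(N+1) = 2 by omega, show N+1+1 - (N+1) = 1 by omega,
    show 2*(N+1) - 2*(N+1) = 0 by omega, show N+1 - (N+1) = 0 by omega,
    show 2*(N+1+1) - 2*(N+1+1) = 0 by omega, show N+1+1 - (N+1+1) = 0 by omega,
    show N+1-1 = N by omega, show 2*(N+1+1) = 2*N+4 by omega,
    show 2*(N+1) = 2*N+2 by omega]
  simp only [Nat.choose_self, Nat.choose_zero_right, Nat.choose_succ_self_right,
    Nat.choose_one_right, catalan_zero]
  rw [show N+1+1 = N+2 by omega]
  apply Int.cast_injective (α := ℚ)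
  push_cast
  linear_combination ((N:ℚ)+2) * hB

theorem zagier_d_recurrence (a : ℕ → ℤ)
    (ha : ∀ n, a n = ∑ k ∈ Finset.range (n + 1),
      (Nat.choose n k : ℤ) * (Nat.choose (2 * k) k : ℤ)
        * (Nat.choose (2 * n - 2 * k) (n - k) : ℤ)) :
    a 0 = 1 ∧ a 1 = 4 ∧
      ∀ n : ℕ, 1 ≤ n →
        ((n : ℤ) + 1) ^ 2 * a (n + 1)
          = (12 * (n : ℤ) ^ 2 + 12 * n + 4) * a n - 32 * (n : ℤ) ^ 2 * a (n - 1) := by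
  have haT : ∀ n, a n = ∑ k ∈ Finset.range (n+1), Tz n k := by
    intro n; rw [ha n]; rfl
  refine ⟨?_, ?_, ?_⟩
  · rw [haT 0]; simp [Tz]
  · rw [haT 1]
    rw [Finset.sum_range_succ, Finset.sum_range_one]
    simp [Tz]
  · intro n hn
    obtain ⟨N, rfl⟩ : ∃ N, n = N+1 := ⟨n-1, by omega⟩
    simp only [Nat.add_sub_cancel]
    have e2 : a (N+1+1) = ∑ k ∈ Finset.range (N+1+1+1), Tz (N+1+1) k := haT (N+1+1)
    have e1 : a (N+1) = ∑ k ∈ Finset.range (N+1+1+1), Tz (N+1) k := by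
      have t1 : Tz (N+1) (N+1+1) = 0 := by
        simp [Tz, Nat.choose_eq_zero_of_lt (show N+1 < N+1+1 by omega)]
      have e : ∑ k ∈ Finset.range (N+1+1+1), Tz (N+1) k
          = ∑ k ∈ Finset.range (N+1+1), Tz (N+1) k := by
        rw [Finset.sum_range_succ, t1, add_zero]
      rw [haT (N+1)]; exact e.symm
    have e0 : a N = ∑ k ∈ Finset.range (N+1+1+1), Tz N k := by
      have t1 : Tz N (N+1) = 0 := by
        simp [Tz, Nat.choose_eq_zero_of_lt (show N < N+1 by omega)]
      have t2 : Tz N (N+1+1) = 0 := by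
        simp [Tz, Nat.choose_eq_zero_of_lt (show N < N+1+1 by omega)]
      have e : ∑ k ∈ Finset.range (N+1+1+1), Tz N k
          = ∑ k ∈ Finset.range (N+1), Tz N k := by
        rw [Finset.sum_range_succ, Finset.sum_range_succ, t1, t2, add_zero, add_zero]
      rw [haT N]; exact e.symm
    rw [e2, e1, e0]
    have hs := sumL N
    rw [Finset.sum_add_distrib, Finset.sum_sub_distrib, ← Finset.mul_sum, ← Finset.mul_sum,
      ← Finset.mul_sum] at hs
    push_cast
    linear_combination hs
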